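/- (Lemma 5.1: Hautus-type estimate on a left half-plane under a bounded perturbation.) Suppose there exists δ > 0 such that Re⟨x, Lx⟩ ≥ δ‖x‖² for all x ∈ X, and suppose the Lyapunov equation ⟨Ax, Lx⟩ + ⟨Lx, Ax⟩ = −‖Cx‖² holds for all x ∈ D. Let G : X → X be a bounded linear operator. Then there exist constants m > 0 and α > 0 such that for every s ∈ ℂ with Re s < −α and every x ∈ D: ‖s·x − Ax − Gx‖² + |Re s|·‖Cx‖² ≥ m·(Re s)²·‖x‖². -/

import Mathlib

/-- Lemma 5.1: Hautus-type estimate on a left half-plane under a bounded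
perturbation. If `L` is a bounded self-adjoint operator which is coercive
(`Re⟨x, Lx⟩ ≥ δ‖x‖²`) and satisfies the Lyapunov equation
`⟨Ax, Lx⟩ + ⟨Lx, Ax⟩ = −‖Cx‖²` on `D`, and `G` is a bounded operator, then there exist
`m > 0` and `α > 0` such that for all `s` with `Re s < −α` and all `x ∈ D`:
`‖s·x − Ax − Gx‖² + |Re s|·‖Cx‖² ≥ m·(Re s)²·‖x‖²`. -/

private lemma hautus_aux (δ NL NG K r n w c q a b : ℝ)
    (hδ : 0 < δ) (hNL0 : 0 ≤ NL) (hn0 : 0 ≤ n) (hw0 : 0 ≤ w) (hc0 : 0 ≤ c)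
    (hKδ : δ ≤ K) (hKL : 4 * NL ^ 2 ≤ K)
    (hr : r < -1) (hs2' : 2 * NG * NL < -r * δ)
    (key : 2 * (r * q - a - b) = -(c ^ 2))
    (hq1 : δ * n ^ 2 ≤ q)
    (ha2 : -(NG * NL * n ^ 2) ≤ a)
    (hb2 : -(NL * w * n) ≤ b) :
    δ ^ 2 * r ^ 2 * n ^ 2 ≤ (w ^ 2 + -r * c ^ 2) * (2 * K) := by
  have hrn : (0 : ℝ) < -r := by linarith
  have hc2 : c ^ 2 = 2 * a + 2 * b - 2 * r * q := by linarith
  have hstep : r ^ 2 * δ * n ^ 2 - 2 * (-r) * (NL * w * n) ≤ (-r) * c ^ 2 := by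
    have h1 : (-r) * c ^ 2 = (-r) * (2 * a + 2 * b - 2 * r * q) := by rw [hc2]
    have h2 : 2 * r ^ 2 * (δ * n ^ 2) ≤ 2 * r ^ 2 * q :=
      mul_le_mul_of_nonneg_left hq1 (by positivity)
    have h3 : (-r) * -(NG * NL * n ^ 2) ≤ (-r) * a :=
      mul_le_mul_of_nonneg_left ha2 hrn.le
    have h4 : (-r) * (2 * NG * NL) * n ^ 2 ≤ (-r) * (-r * δ) * n ^ 2 :=
      mul_le_mul_of_nonneg_right (mul_le_mul_of_nonneg_left hs2'.le hrn.le) (sq_nonneg n)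
    have h5 : (-r) * -(NL * w * n) ≤ (-r) * b :=
      mul_le_mul_of_nonneg_left hb2 hrn.le
    nlinarith [h1, h2, h3, h4, h5]
  have hAMGM : 0 ≤ (2 * NL * w + δ * r * n / 2) ^ 2 := sq_nonneg _
  have hmul : δ * (r ^ 2 * δ * n ^ 2 - 2 * (-r) * (NL * w * n)) ≤ δ * ((-r) * c ^ 2) :=
    mul_le_mul_of_nonneg_left hstep hδ.le
  have hK1 : δ * ((-r) * c ^ 2) ≤ K * ((-r) * c ^ 2) :=
    mul_le_mul_of_nonneg_right hKδ (mul_nonneg hrn.le (sq_nonneg c))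
  have hK2 : (4 * NL ^ 2) * w ^ 2 ≤ K * w ^ 2 :=
    mul_le_mul_of_nonneg_right hKL (sq_nonneg w)
  have hKc : 0 ≤ K * ((-r) * c ^ 2) :=
    mul_nonneg (by linarith) (mul_nonneg hrn.le (sq_nonneg c))
  have hKw : 0 ≤ K * w ^ 2 := mul_nonneg (by linarith) (sq_nonneg w)
  nlinarith [hmul, hAMGM, hK1, hK2, hKc, hKw]

theorem hautus_left_half_plane
    {X Y : Type*} [NormedAddCommGroup X] [InnerProductSpace ℂ X] [CompleteSpace X]
    [NormedAddCommGroup Y] [InnerProductSpace ℂ Y] [CompleteSpace Y]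
    (D : Submodule ℂ X) (A : D →ₗ[ℂ] X) (C : D →ₗ[ℂ] Y)
    (L : X →L[ℂ] X) (hL : IsSelfAdjoint L)
    (δ : ℝ) (hδ : 0 < δ)
    (hcoer : ∀ x : X, δ * ‖x‖ ^ 2 ≤ (inner ℂ x (L x) : ℂ).re)
    (hlyap : ∀ x : D, (inner ℂ (A x) (L (x : X)) : ℂ) + (inner ℂ (L (x : X)) (A x) : ℂ)
      = -(‖C x‖ ^ 2 : ℂ))
    (G : X →L[ℂ] X) :
    ∃ m > (0 : ℝ), ∃ α > (0 : ℝ), ∀ s : ℂ, s.re < -α → ∀ x : D,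
      m * s.re ^ 2 * ‖(x : X)‖ ^ 2 ≤
        ‖s • (x : X) - A x - G (x : X)‖ ^ 2 + |s.re| * ‖C x‖ ^ 2 := by
  set NL := ‖L‖ with hNLdef
  set NG := ‖G‖ with hNGdef
  have hNL0 : 0 ≤ NL := norm_nonneg _
  have hNG0 : 0 ≤ NG := norm_nonneg _
  set K := max δ (4 * NL ^ 2) with hKdef
  have hK0 : 0 < K := lt_of_lt_of_le hδ (le_max_left _ _)
  have hKδ : δ ≤ K := le_max_left _ _
  have hKL : 4 * NL ^ 2 ≤ K := le_max_right _ _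
  refine ⟨δ ^ 2 / (2 * K), by positivity, max 1 (2 * NG * NL / δ),
    lt_of_lt_of_le one_pos (le_max_left _ _), ?_⟩
  intro s hs x
  set xX : X := (x : X) with hxX
  set v : X := s • xX - A x - G xX with hv
  have hs1 : s.re < -1 := lt_of_lt_of_le hs (by simp [le_max_left])
  have hs2 : s.re < -(2 * NG * NL / δ) := lt_of_lt_of_le hs (by simp [le_max_right])
  have hs2' : 2 * NG * NL < -s.re * δ := by
    have := (div_lt_iff₀ hδ).mp (lt_neg.mp hs2)
    linarith
  -- self-adjointness: inner xX (L xX) is real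
  have hsym : ∀ a b : X, (inner ℂ (L a) b : ℂ) = inner ℂ a (L b) :=
    fun a b => hL.isSymmetric a b
  have him : (inner ℂ xX (L xX) : ℂ).im = 0 := by
    have h1 : (starRingEnd ℂ) (inner ℂ xX (L xX) : ℂ) = inner ℂ xX (L xX) := by
      rw [inner_conj_symm, hsym]
    have h2 := congrArg Complex.im h1
    rw [Complex.conj_im] at h2
    linarith
  set q : ℝ := (inner ℂ xX (L xX) : ℂ).re with hq
  set a : ℝ := (inner ℂ (G xX) (L xX) : ℂ).re with ha
  set b : ℝ := (inner ℂ v (L xX) : ℂ).re with hb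
  -- Lyapunov real part
  have hre2 : 2 * (inner ℂ (A x) (L xX) : ℂ).re = -(‖C x‖ ^ 2) := by
    have h0 := hlyap x
    have h1 : (inner ℂ (L xX) (A x) : ℂ) = (starRingEnd ℂ) (inner ℂ (A x) (L xX) : ℂ) := by
      rw [inner_conj_symm]
    rw [h1] at h0
    have h2 := congrArg Complex.re h0
    simp only [← Complex.ofReal_pow, Complex.add_re, Complex.conj_re, Complex.neg_re,
      Complex.ofReal_re] at h2
    linarith
  have hAx : (A x : X) = s • xX - G xX - v := by
    rw [hv]; abel
  have hinner : (inner ℂ (A x) (L xX) : ℂ)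
      = (starRingEnd ℂ) s * inner ℂ xX (L xX) - inner ℂ (G xX) (L xX) - inner ℂ v (L xX) := by
    rw [hAx, inner_sub_left, inner_sub_left, inner_smul_left]
  have hre3 : (inner ℂ (A x) (L xX) : ℂ).re = s.re * q - a - b := by
    rw [hinner]
    simp [Complex.sub_re, Complex.mul_re, Complex.conj_re, Complex.conj_im, him, hq, ha, hb]
  have key : 2 * (s.re * q - a - b) = -(‖C x‖ ^ 2) := by
    rw [← hre3]; exact hre2
  -- bounds
  have hq1 : δ * ‖xX‖ ^ 2 ≤ q := hcoer xX
  have hbound : ∀ y : X, |(inner ℂ y (L xX) : ℂ).re| ≤ ‖y‖ * (NL * ‖xX‖) := by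
    intro y
    calc |(inner ℂ y (L xX) : ℂ).re| ≤ ‖(inner ℂ y (L xX) : ℂ)‖ := Complex.abs_re_le_norm _
      _ ≤ ‖y‖ * ‖L xX‖ := by
          simpa using norm_inner_le_norm (𝕜 := ℂ) y (L xX)
      _ ≤ ‖y‖ * (NL * ‖xX‖) := by
          exact mul_le_mul_of_nonneg_left (L.le_opNorm xX) (norm_nonneg y)
  have haB : |a| ≤ NG * NL * ‖xX‖ ^ 2 := by
    calc |a| ≤ ‖G xX‖ * (NL * ‖xX‖) := hbound _
      _ ≤ NG * ‖xX‖ * (NL * ‖xX‖) := by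
          exact mul_le_mul_of_nonneg_right (G.le_opNorm xX) (by positivity)
      _ = NG * NL * ‖xX‖ ^ 2 := by ring
  have hbB : |b| ≤ NL * ‖v‖ * ‖xX‖ := by
    calc |b| ≤ ‖v‖ * (NL * ‖xX‖) := hbound _
      _ = NL * ‖v‖ * ‖xX‖ := by ring
  have habs : |s.re| = -s.re := abs_of_neg (by linarith)
  rw [habs]
  rw [div_mul_eq_mul_div, div_mul_eq_mul_div, div_le_iff₀ (by positivity)]
  set n := ‖xX‖ with hn
  set w := ‖v‖ with hw
  set c := ‖C x‖ with hc
  have hn0 : 0 ≤ n := norm_nonneg _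
  have hw0 : 0 ≤ w := norm_nonneg _
  have hc0 : 0 ≤ c := norm_nonneg _
  have ha1 : a ≤ NG * NL * n ^ 2 := le_trans (le_abs_self a) haB
  have ha2 : -(NG * NL * n ^ 2) ≤ a := neg_le_of_abs_le haB
  have hb1 : b ≤ NL * w * n := le_trans (le_abs_self b) hbB
  have hb2 : -(NL * w * n) ≤ b := neg_le_of_abs_le hbB
  exact hautus_aux δ NL NG K s.re n w c q a b hδ hNL0 hn0 hw0 hc0 hKδ hKL hs1 hs2' key hq1 ha2 hb2
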